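/- Fix integers n ≥ k ≥ 1 and set q = k/n. Let E be a ground set with |E| = n and x_e = q for all e ∈ E, and let F = {S ⊆ E : |S| ≤ k}. Let μ be any probability distribution on F such that for every e ∈ E and every T ⊆ E∖{e} with |T| ≤ k and P_{S∼μ}[S∖{e} = T] > 0, P_{S∼μ}[e ∈ S | S∖{e} = T] ≤ q. Then min_{e∈E} P_{S∼μ}[e ∈ S]/q ≤ P[Bin(n−1, q) < k] / P[Bin(n, q) ≤ k]. Consequently, any stationary OCRS for the k-uniform matroid has selectability at most P[Bin(n−1,q)<k]/P[Bin(n,q)≤k] on this instance, and letting n → ∞ this bound converges to α_k = P[Poisson(k) < k]/P[Poisson(k) ≤ k], so no stationary OCRS for the k-uniform matroid is better than α_k-selectable. -/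

import Mathlib

open Finset Filter

section Helpers

lemma aux_term_tendsto (k t d : ℕ) :
    Tendsto (fun m : ℕ => ((m - d).choose t : ℝ) * ((k : ℝ) / m) ^ t * (1 - (k : ℝ) / m) ^ (m - d - t))
      atTop (nhds (Real.exp (-(k:ℝ)) * (k:ℝ) ^ t / (t.factorial : ℝ))) := by
  have hfac : (0:ℝ) < (t.factorial : ℝ) := by exact_mod_cast t.factorial_pos
  -- limit of the model function
  have h1 : Tendsto (fun m : ℕ => ∏ i ∈ range t, (1 - ((d + i : ℕ) : ℝ) / m)) atTop (nhds 1) := by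
    have : Tendsto (fun m : ℕ => ∏ i ∈ range t, (1 - ((d + i : ℕ) : ℝ) / m)) atTop
        (nhds (∏ i ∈ range t, (1 : ℝ))) := by
      apply tendsto_finset_prod
      intro i _
      have := tendsto_const_div_atTop_nhds_zero_nat ((d + i : ℕ) : ℝ)
      have := (tendsto_const_nhds (x := (1:ℝ)) (f := atTop)).sub this
      simpa using this
    simpa using this
  have h2 : Tendsto (fun m : ℕ => (1 + (-(k:ℝ)) / m) ^ m) atTop (nhds (Real.exp (-(k:ℝ)))) :=
    Real.tendsto_one_add_div_pow_exp (-(k:ℝ))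
  have h3 : Tendsto (fun m : ℕ => (1 - (k:ℝ) / m) ^ (d + t)) atTop (nhds 1) := by
    have hb : Tendsto (fun m : ℕ => 1 - (k:ℝ) / m) atTop (nhds 1) := by
      have := tendsto_const_div_atTop_nhds_zero_nat ((k : ℕ) : ℝ)
      have := (tendsto_const_nhds (x := (1:ℝ)) (f := atTop)).sub this
      simpa using this
    simpa using hb.pow (d + t)
  have hg : Tendsto (fun m : ℕ => ((k:ℝ) ^ t / (t.factorial : ℝ)) *
      (∏ i ∈ range t, (1 - ((d + i : ℕ) : ℝ) / m)) *
      ((1 + (-(k:ℝ)) / m) ^ m / (1 - (k:ℝ) / m) ^ (d + t))) atTop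
      (nhds (Real.exp (-(k:ℝ)) * (k:ℝ) ^ t / (t.factorial : ℝ))) := by
    have := ((tendsto_const_nhds (x := ((k:ℝ) ^ t / (t.factorial : ℝ))) (f := atTop)).mul h1).mul
      (h2.div h3 one_ne_zero)
    simp only [Pi.div_apply] at this
    convert this using 2
    ring
  apply hg.congr'
  filter_upwards [eventually_ge_atTop (d + t + k + 1)] with m hm
  have hmk : (k : ℝ) < m := by
    have : k < m := by omega
    exact_mod_cast this
  have hm0 : (0:ℝ) < m := lt_of_le_of_lt (by positivity) hmk
  have hbpos : (0:ℝ) < 1 - (k:ℝ)/m := by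
    rw [sub_pos, div_lt_one hm0]; exact hmk
  -- choose as product
  have hc : ((m - d).choose t : ℝ) = (∏ i ∈ range t, ((m:ℝ) - (d + i : ℕ))) / (t.factorial : ℝ) := by
    rw [eq_div_iff (ne_of_gt hfac)]
    have := Nat.descFactorial_eq_factorial_mul_choose (m - d) t
    have hcast : ((m - d).descFactorial t : ℝ) = ∏ i ∈ range t, ((m:ℝ) - (d + i : ℕ)) := by
      rw [Nat.descFactorial_eq_prod_range]
      push_cast [Nat.cast_prod]
      apply Finset.prod_congr rfl
      intro i hi
      have hi' : i < t := mem_range.mp hi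
      have : d + i ≤ m := by omega
      have h2 : i ≤ m - d := by omega
      rw [Nat.cast_sub h2, Nat.cast_sub (by omega : d ≤ m)]
      ring
    rw [← hcast, this]
    push_cast
    ring
  have hsub : m - d - t = m - (d + t) := by omega
  have hpow : (1 - (k:ℝ)/m) ^ (m - d - t) = (1 + (-(k:ℝ))/m) ^ m / (1 - (k:ℝ)/m) ^ (d + t) := by
    rw [hsub]
    rw [pow_sub₀ _ (ne_of_gt hbpos) (by omega : d + t ≤ m)]
    rw [div_eq_mul_inv]
    congr 2
    ring
  rw [hc, hpow]
  rw [div_pow]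
  have hprodeq : (∏ i ∈ range t, (1 - ((d + i : ℕ) : ℝ) / m))
      = (∏ i ∈ range t, ((m:ℝ) - (d + i : ℕ))) / (m:ℝ)^t := by
    rw [show ((m:ℝ)^t) = ∏ _i ∈ range t, (m:ℝ) by rw [Finset.prod_const, card_range]]
    rw [← Finset.prod_div_distrib]
    apply Finset.prod_congr rfl
    intro i _
    rw [sub_div, div_self (ne_of_gt hm0)]
  rw [hprodeq]
  ring


lemma part2 (k : ℕ) (hk : 1 ≤ k) : Filter.Tendsto
        (fun m : ℕ =>
          (∑ t ∈ range k,
              ((m - 1).choose t : ℝ) * ((k : ℝ) / m) ^ t * (1 - (k : ℝ) / m) ^ (m - 1 - t)) /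
          (∑ t ∈ range (k + 1),
              (m.choose t : ℝ) * ((k : ℝ) / m) ^ t * (1 - (k : ℝ) / m) ^ (m - t)))
        Filter.atTop
        (nhds ((∑ t ∈ range k, Real.exp (-(k : ℝ)) * (k : ℝ) ^ t / (t.factorial : ℝ)) /
               (∑ t ∈ range (k + 1), Real.exp (-(k : ℝ)) * (k : ℝ) ^ t / (t.factorial : ℝ)))) := by
  have hnum : Tendsto (fun m : ℕ => ∑ t ∈ range k,
      ((m - 1).choose t : ℝ) * ((k : ℝ) / m) ^ t * (1 - (k : ℝ) / m) ^ (m - 1 - t)) atTop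
      (nhds (∑ t ∈ range k, Real.exp (-(k : ℝ)) * (k : ℝ) ^ t / (t.factorial : ℝ))) := by
    apply tendsto_finset_sum
    intro t _
    exact aux_term_tendsto k t 1
  have hden : Tendsto (fun m : ℕ => ∑ t ∈ range (k+1),
      (m.choose t : ℝ) * ((k : ℝ) / m) ^ t * (1 - (k : ℝ) / m) ^ (m - t)) atTop
      (nhds (∑ t ∈ range (k+1), Real.exp (-(k : ℝ)) * (k : ℝ) ^ t / (t.factorial : ℝ))) := by
    apply tendsto_finset_sum
    intro t _
    simpa using aux_term_tendsto k t 0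
  have hpos : (0:ℝ) < ∑ t ∈ range (k+1), Real.exp (-(k : ℝ)) * (k : ℝ) ^ t / (t.factorial : ℝ) := by
    apply Finset.sum_pos
    · intro t _
      have : (0:ℝ) < (k:ℝ) := by exact_mod_cast hk
      positivity
    · exact nonempty_range_add_one
  exact hnum.div hden (ne_of_gt hpos)



lemma count_pairs {E : Type*} [Fintype E] [DecidableEq E] (f : Finset E → ℝ) (i : ℕ) :
    ∑ T ∈ univ.filter (fun T : Finset E => T.card = i), ∑ e ∈ Tᶜ, f (insert e T)
    = ∑ S ∈ univ.filter (fun S : Finset E => S.card = i + 1), (S.card : ℝ) * f S := by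
  have hR : ∀ S : Finset E, (S.card : ℝ) * f S = ∑ _e ∈ S, f S := by
    intro S; rw [Finset.sum_const, nsmul_eq_mul]
  rw [Finset.sum_congr rfl (fun S _ => hR S)]
  rw [Finset.sum_sigma', Finset.sum_sigma']
  apply Finset.sum_nbij' (i := fun x : Σ _T : Finset E, E => (⟨insert x.2 x.1, x.2⟩ : Σ _S : Finset E, E))
    (j := fun y : Σ _S : Finset E, E => (⟨y.1.erase y.2, y.2⟩ : Σ _T : Finset E, E))
  · rintro ⟨T, e⟩ ha
    simp only [Finset.mem_sigma, mem_filter, mem_univ, true_and, mem_compl] at ha ⊢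
    obtain ⟨hc, he⟩ := ha
    exact ⟨by rw [card_insert_of_notMem he, hc], mem_insert_self _ _⟩
  · rintro ⟨S, e⟩ ha
    simp only [Finset.mem_sigma, mem_filter, mem_univ, true_and, mem_compl] at ha ⊢
    obtain ⟨hc, he⟩ := ha
    refine ⟨?_, notMem_erase _ _⟩
    rw [card_erase_of_mem he, hc]; rfl
  · rintro ⟨T, e⟩ ha
    simp only [Finset.mem_sigma, mem_filter, mem_univ, true_and, mem_compl] at ha
    simp [Finset.erase_insert ha.2]
  · rintro ⟨S, e⟩ ha
    simp only [Finset.mem_sigma, mem_filter, mem_univ, true_and] at ha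
    simp [Finset.insert_erase ha.2]
  · rintro ⟨T, e⟩ ha
    simp only [Finset.mem_sigma, mem_filter, mem_univ, true_and, mem_compl] at ha
    simp

lemma part1 {E : Type*} [Fintype E] [DecidableEq E]
    (n k : ℕ) (hk : 1 ≤ k) (hkn : k < n)
    (hcard : Fintype.card E = n)
    (μ : Finset E → ℝ)
    (hnn : ∀ S, 0 ≤ μ S)
    (hsum : (∑ S : Finset E, μ S) = 1)
    (hsupp : ∀ S, μ S ≠ 0 → S.card ≤ k)
    (hstat : ∀ e : E, ∀ T : Finset E, T.card ≤ k → e ∉ T →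
      0 < μ T + μ (insert e T) →
      μ (insert e T) / (μ T + μ (insert e T)) ≤ (k : ℝ) / (n : ℝ)) :
    (∃ e : E, (∑ S ∈ univ.filter (fun S => e ∈ S), μ S) / ((k : ℝ) / (n : ℝ)) ≤
      (∑ t ∈ range k,
          ((n - 1).choose t : ℝ) * ((k : ℝ) / n) ^ t * (1 - (k : ℝ) / n) ^ (n - 1 - t)) /
      (∑ t ∈ range (k + 1),
          (n.choose t : ℝ) * ((k : ℝ) / n) ^ t * (1 - (k : ℝ) / n) ^ (n - t))) := by
  have hn : 0 < n := lt_of_le_of_lt (Nat.zero_le k) hkn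
  have hn0 : (0:ℝ) < n := by exact_mod_cast hn
  set q : ℝ := (k:ℝ)/n with hqdef
  have hq0 : 0 < q := by positivity
  have hq1 : q < 1 := by
    rw [hqdef, div_lt_one hn0]; exact_mod_cast hkn
  have h1q : 0 < 1 - q := by linarith
  set p : ℕ → ℝ := fun j => ∑ S ∈ univ.filter (fun S : Finset E => S.card = j), μ S with hpdef
  set b : ℕ → ℝ := fun j => (n.choose j : ℝ) * q^j * (1-q)^(n-j) with hbdef
  have hbpos : ∀ j, j ≤ n → 0 < b j := by
    intro j hj
    have : 0 < n.choose j := Nat.choose_pos hj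
    have : (0:ℝ) < n.choose j := by exact_mod_cast this
    rw [hbdef]; positivity
  have hpnn : ∀ j, 0 ≤ p j := fun j => Finset.sum_nonneg (fun S _ => hnn S)
  have hpz : ∀ j, k < j → p j = 0 := by
    intro j hj
    apply Finset.sum_eq_zero
    intro S hS
    simp only [mem_filter] at hS
    by_contra h
    have := hsupp S h
    omega
  -- total probability over range (k+1)
  have hp1n : ∑ j ∈ range (n+1), p j = 1 := by
    rw [hpdef, ← hsum]
    apply Finset.sum_fiberwise_of_maps_to
    intro S _
    rw [mem_range, Nat.lt_succ_iff, ← hcard]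
    exact card_le_univ S
  have hp1 : ∑ j ∈ range (k+1), p j = 1 := by
    rw [← hp1n]
    apply Finset.sum_subset
    · exact Finset.range_subset_range.mpr (by omega)
    · intro j _ hj
      exact hpz j (by simpa using hj)
  -- recurrence
  have hrec : ∀ i, i < k → (1-q) * (((i:ℝ)+1) * p (i+1)) ≤ q * (((n:ℝ) - i) * p i) := by
    intro i hi
    have hL : ((i:ℝ)+1) * p (i+1) = ∑ S ∈ univ.filter (fun S : Finset E => S.card = i+1), (S.card : ℝ) * μ S := by
      rw [hpdef, Finset.mul_sum]
      apply Finset.sum_congr rfl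
      intro S hS
      simp only [mem_filter] at hS
      rw [hS.2]; push_cast; ring
    rw [hL, ← count_pairs]
    have hR : ((n:ℝ) - i) * p i = ∑ T ∈ univ.filter (fun T : Finset E => T.card = i), ∑ _e ∈ Tᶜ, μ T := by
      rw [hpdef, Finset.mul_sum]
      apply Finset.sum_congr rfl
      intro T hT
      simp only [mem_filter] at hT
      rw [Finset.sum_const, nsmul_eq_mul, card_compl, hcard, hT.2, Nat.cast_sub (by omega)]
    rw [hR, Finset.mul_sum, Finset.mul_sum]
    apply Finset.sum_le_sum
    intro T hT
    simp only [mem_filter] at hT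
    rw [Finset.mul_sum, Finset.mul_sum]
    apply Finset.sum_le_sum
    intro e he
    rw [mem_compl] at he
    by_cases hpos : 0 < μ T + μ (insert e T)
    · have := hstat e T (by omega) he hpos
      rw [div_le_iff₀ hpos] at this
      linarith
    · have h1 : μ T = 0 ∧ μ (insert e T) = 0 := by
        constructor <;> nlinarith [hnn T, hnn (insert e T)]
      rw [h1.1, h1.2]; simp
  -- likelihood ratio monotonicity
  have hmono : ∀ i, i < k → p (i+1) * b i ≤ p i * b (i+1) := by
    intro i hi
    have hin : i < n := by omega
    have hCpos : (0:ℝ) < (n.choose (i+1) : ℝ) := by exact_mod_cast Nat.choose_pos (by omega)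
    have hfac : (0:ℝ) ≤ (n.choose (i+1) : ℝ) * q^i * (1-q)^(n-(i+1)) := by positivity
    have h := mul_le_mul_of_nonneg_right (hrec i hi) hfac
    have hni : n - i = (n - (i+1)) + 1 := by omega
    have hchoose : ((n.choose (i+1) : ℝ)) * ((i:ℝ)+1) = (n.choose i : ℝ) * ((n:ℝ) - i) := by
      have := Nat.choose_succ_right_eq n i
      have hcast : ((n.choose (i+1) * (i+1) : ℕ) : ℝ) = ((n.choose i * (n - i) : ℕ) : ℝ) := by
        exact_mod_cast congrArg (Nat.cast (R := ℝ)) this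
      push_cast [Nat.cast_sub hin.le] at hcast
      linarith [hcast]
    have hnipos : (0:ℝ) < (n:ℝ) - i := by
      have : (i:ℝ) < n := by exact_mod_cast hin
      linarith
    have e1 : ((n:ℝ)-i) * (p (i+1) * ((n.choose i:ℝ) * q^i * ((1-q)^(n-(i+1)) * (1-q))))
        = (1-q) * (((i:ℝ)+1) * p (i+1)) * ((n.choose (i+1):ℝ) * q^i * (1-q)^(n-(i+1))) := by
      linear_combination (-(p (i+1) * q^i * (1-q)^(n-(i+1)) * (1-q))) * hchoose
    have e2 : ((n:ℝ)-i) * (p i * ((n.choose (i+1):ℝ) * q^(i+1) * (1-q)^(n-(i+1))))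
        = q * (((n:ℝ) - i) * p i) * ((n.choose (i+1):ℝ) * q^i * (1-q)^(n-(i+1))) := by
      ring
    have key : ((n:ℝ)-i) * (p (i+1) * ((n.choose i:ℝ) * q^i * ((1-q)^(n-(i+1)) * (1-q))))
        ≤ ((n:ℝ)-i) * (p i * ((n.choose (i+1):ℝ) * q^(i+1) * (1-q)^(n-(i+1)))) := by
      rw [e1, e2]; exact h
    have := (mul_le_mul_iff_right₀ hnipos).mp key
    rw [hbdef]
    simp only []
    rw [hni, pow_succ]
    exact this
  have hanti : ∀ i j, i ≤ j → j ≤ k → p j * b i ≤ p i * b j := by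
    intro i j hij hjk
    induction j, hij using Nat.le_induction with
    | base => exact le_rfl
    | succ j hij ih =>
      have hjk' : j ≤ k := by omega
      have ih' := ih hjk'
      have h1 := hmono j (by omega)
      have hbj : 0 < b j := hbpos j (by omega)
      have hbj1 : 0 < b (j+1) := hbpos (j+1) (by omega)
      have hbi : 0 < b i := hbpos i (by omega)
      have c1 : p (j+1) * b i * b j ≤ p j * b (j+1) * b i := by nlinarith
      have c2 : p j * b i * b (j+1) ≤ p i * b j * b (j+1) := by nlinarith
      have : p (j+1) * b i * b j ≤ p i * b (j+1) * b j := by nlinarith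
      exact le_of_mul_le_mul_right this hbj
  -- Chebyshev step
  set R := range (k+1) with hRdef
  set P1 := ∑ j ∈ R, (j:ℝ) * p j with hP1
  set B0 := ∑ j ∈ R, b j with hB0
  set B1 := ∑ j ∈ R, (j:ℝ) * b j with hB1
  have hcheb : P1 * B0 ≤ B1 := by
    have key : ∑ i ∈ R, ∑ j ∈ R, ((p j * b i - p i * b j) * ((j:ℝ) - i)) ≤ 0 := by
      apply Finset.sum_nonpos
      intro i hiR
      apply Finset.sum_nonpos
      intro j hjR
      rw [mem_range] at hiR hjR
      rcases le_total i j with hij | hji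
      · apply mul_nonpos_of_nonpos_of_nonneg
        · have := hanti i j hij (by omega); linarith
        · have : (i:ℝ) ≤ j := by exact_mod_cast hij
          linarith
      · apply mul_nonpos_of_nonneg_of_nonpos
        · have := hanti j i hji (by omega); linarith
        · have : (j:ℝ) ≤ i := by exact_mod_cast hji
          linarith
    have expand : ∑ i ∈ R, ∑ j ∈ R, ((p j * b i - p i * b j) * ((j:ℝ) - i))
        = 2 * (P1 * B0 - B1 * (∑ j ∈ R, p j)) := by
      have : ∀ i ∈ R, ∑ j ∈ R, ((p j * b i - p i * b j) * ((j:ℝ) - i))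
          = b i * P1 - ((i:ℝ) * b i) * (∑ j ∈ R, p j) - p i * B1 + ((i:ℝ) * p i) * B0 := by
        intro i _
        rw [hP1, hB1, hB0, Finset.mul_sum, Finset.mul_sum, Finset.mul_sum, Finset.mul_sum]
        rw [← Finset.sum_sub_distrib, ← Finset.sum_sub_distrib, ← Finset.sum_add_distrib]
        apply Finset.sum_congr rfl
        intro j _
        ring
      rw [Finset.sum_congr rfl this, hp1]
      simp only [mul_one]
      simp only [Finset.sum_add_distrib, Finset.sum_sub_distrib, ← Finset.sum_mul]
      rw [← hB0, ← hB1, ← hP1, hp1]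
      ring
    rw [expand, hp1] at key
    linarith
  set Num := ∑ t ∈ range k, ((n-1).choose t : ℝ) * q^t * (1-q)^(n-1-t) with hNum
  have hswap : ∑ e : E, (∑ S ∈ univ.filter (fun S => e ∈ S), μ S) = P1 := by
    have h1 : ∑ e : E, (∑ S ∈ univ.filter (fun S => e ∈ S), μ S)
        = ∑ S : Finset E, (S.card : ℝ) * μ S := by
      simp only [Finset.sum_filter]
      rw [Finset.sum_comm]
      apply Finset.sum_congr rfl
      intro S _
      rw [Finset.sum_ite_mem, Finset.univ_inter, Finset.sum_const, nsmul_eq_mul]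
    rw [h1, hP1, hRdef]
    have h2 : ∑ S : Finset E, (S.card:ℝ) * μ S
        = ∑ j ∈ range (n+1), ∑ S ∈ univ.filter (fun S : Finset E => S.card = j), (S.card:ℝ) * μ S := by
      symm
      apply Finset.sum_fiberwise_of_maps_to
      intro S _
      rw [mem_range, Nat.lt_succ_iff, ← hcard]
      exact card_le_univ S
    have h3 : ∀ j ∈ range (n+1), (∑ S ∈ univ.filter (fun S : Finset E => S.card = j), (S.card:ℝ) * μ S)
        = (j:ℝ) * p j := by
      intro j _
      rw [hpdef, Finset.mul_sum]
      apply Finset.sum_congr rfl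
      intro S hS
      simp only [mem_filter] at hS
      rw [hS.2]
    rw [h2, Finset.sum_congr rfl h3]
    symm
    apply Finset.sum_subset (Finset.range_subset_range.mpr (by omega))
    intro j _ hj
    rw [hpz j (by simpa using hj), mul_zero]
  have hB1id : B1 = (n:ℝ) * q * Num := by
    rw [hB1, hRdef, Finset.sum_range_succ']
    simp only [Nat.cast_zero, zero_mul, add_zero]
    rw [hNum, Finset.mul_sum]
    apply Finset.sum_congr rfl
    intro i hi
    rw [mem_range] at hi
    have hident : (n : ℕ) * (n-1).choose i = n.choose (i+1) * (i+1) := by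
      have := Nat.add_one_mul_choose_eq (n-1) i
      have hn1 : n - 1 + 1 = n := by omega
      rw [hn1] at this
      exact this
    have hcast : ((n:ℝ)) * ((n-1).choose i : ℝ) = (n.choose (i+1) : ℝ) * ((i:ℝ)+1) := by
      exact_mod_cast congrArg (Nat.cast (R := ℝ)) hident
    have hexp : n - (i+1) = n - 1 - i := by omega
    rw [hbdef]
    simp only []
    rw [hexp]
    push_cast
    calc ((i:ℝ)+1) * ((n.choose (i+1):ℝ) * q^(i+1) * (1-q)^(n-1-i))
        = ((n.choose (i+1) : ℝ) * ((i:ℝ)+1)) * q^(i+1) * (1-q)^(n-1-i) := by ring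
      _ = ((n:ℝ) * ((n-1).choose i : ℝ)) * q^(i+1) * (1-q)^(n-1-i) := by rw [hcast]
      _ = (n:ℝ) * q * (((n-1).choose i : ℝ) * q^i * (1-q)^(n-1-i)) := by ring
  have hB0pos : 0 < B0 := by
    rw [hB0]
    apply Finset.sum_pos
    · intro j hj
      rw [hRdef, mem_range] at hj
      exact hbpos j (by omega)
    · rw [hRdef]; exact nonempty_range_add_one
  have hEne : (univ : Finset E).Nonempty := by
    rw [← Finset.card_pos, Finset.card_univ, hcard]; omega
  have hsum_le : ∑ e : E, (∑ S ∈ univ.filter (fun S => e ∈ S), μ S)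
      ≤ ∑ _e : E, q * (Num / B0) := by
    rw [Finset.sum_const, Finset.card_univ, hcard, nsmul_eq_mul, hswap]
    have : P1 ≤ B1 / B0 := by
      rw [le_div_iff₀ hB0pos]; exact hcheb
    have hB1' : B1 / B0 = (n:ℝ) * (q * (Num / B0)) := by
      rw [hB1id]; ring
    linarith [hB1'.symm ▸ this]
  obtain ⟨e, _, he⟩ := Finset.exists_le_of_sum_le hEne hsum_le
  refine ⟨e, ?_⟩
  rw [div_le_iff₀ hq0]
  calc ∑ S ∈ univ.filter (fun S => e ∈ S), μ S ≤ q * (Num / B0) := he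
    _ = Num / ((range (k+1)).sum b) * q := by rw [hB0, hRdef]; ring

end Helpers

theorem stmt_10 {E : Type*} [Fintype E] [DecidableEq E]
    (n k : ℕ) (hk : 1 ≤ k) (hkn : k ≤ n)
    (hcard : Fintype.card E = n)
    (μ : Finset E → ℝ)
    (hnn : ∀ S, 0 ≤ μ S)
    (hsum : (∑ S : Finset E, μ S) = 1)
    (hsupp : ∀ S, μ S ≠ 0 → S.card ≤ k)
    -- stationary implementability with activation probabilities x_e = q = k/n
    (hstat : ∀ e : E, ∀ T : Finset E, T.card ≤ k → e ∉ T →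
      0 < μ T + μ (insert e T) →
      μ (insert e T) / (μ T + μ (insert e T)) ≤ (k : ℝ) / (n : ℝ)) :
    -- min_e P[e ∈ S]/q  ≤  P[Bin(n−1,q) < k] / P[Bin(n,q) ≤ k]
    (∃ e : E, (∑ S ∈ univ.filter (fun S => e ∈ S), μ S) / ((k : ℝ) / (n : ℝ)) ≤
      (∑ t ∈ range k,
          ((n - 1).choose t : ℝ) * ((k : ℝ) / n) ^ t * (1 - (k : ℝ) / n) ^ (n - 1 - t)) /
      (∑ t ∈ range (k + 1),
          (n.choose t : ℝ) * ((k : ℝ) / n) ^ t * (1 - (k : ℝ) / n) ^ (n - t)))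
    -- and as n → ∞ this upper bound converges to α_k = P[Poisson(k) < k]/P[Poisson(k) ≤ k]
    ∧ Filter.Tendsto
        (fun m : ℕ =>
          (∑ t ∈ range k,
              ((m - 1).choose t : ℝ) * ((k : ℝ) / m) ^ t * (1 - (k : ℝ) / m) ^ (m - 1 - t)) /
          (∑ t ∈ range (k + 1),
              (m.choose t : ℝ) * ((k : ℝ) / m) ^ t * (1 - (k : ℝ) / m) ^ (m - t)))
        Filter.atTop
        (nhds ((∑ t ∈ range k, Real.exp (-(k : ℝ)) * (k : ℝ) ^ t / (t.factorial : ℝ)) /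
               (∑ t ∈ range (k + 1), Real.exp (-(k : ℝ)) * (k : ℝ) ^ t / (t.factorial : ℝ)))) := by
  constructor
  · rcases lt_or_eq_of_le hkn with hlt | heq
    · exact part1 n k hk hlt hcard μ hnn hsum hsupp hstat
    · -- k = n : the bound is 1/1 and probabilities are at most 1
      subst heq
      have hn : 0 < k := hk
      have hn0 : (0:ℝ) < k := by exact_mod_cast hn
      have hq1 : (k:ℝ)/(k:ℝ) = 1 := div_self (ne_of_gt hn0)
      have hEne : (univ : Finset E).Nonempty := by
        rw [← Finset.card_pos, Finset.card_univ, hcard]; omega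
      obtain ⟨e, -⟩ := hEne
      refine ⟨e, ?_⟩
      rw [hq1]
      have hNum : (∑ t ∈ range k,
          ((k - 1).choose t : ℝ) * (1:ℝ) ^ t * (1 - (1:ℝ)) ^ (k - 1 - t)) = 1 := by
        rw [Finset.sum_eq_single (k-1)]
        · simp [Nat.sub_self]
        · intro t ht hne
          rw [mem_range] at ht
          norm_num [zero_pow (show k-1-t ≠ 0 by omega)]
        · intro h
          exact absurd (mem_range.mpr (by omega)) h
      have hDen : (∑ t ∈ range (k + 1),
          (k.choose t : ℝ) * (1:ℝ) ^ t * (1 - (1:ℝ)) ^ (k - t)) = 1 := by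
        rw [Finset.sum_eq_single k]
        · simp [Nat.sub_self]
        · intro t ht hne
          rw [mem_range] at ht
          norm_num [zero_pow (show k-t ≠ 0 by omega)]
        · intro h
          exact absurd (mem_range.mpr (by omega)) h
      rw [hNum, hDen]
      have : (∑ S ∈ univ.filter (fun S => e ∈ S), μ S) ≤ 1 := by
        rw [← hsum]
        apply Finset.sum_le_sum_of_subset_of_nonneg (Finset.filter_subset _ _)
        intro S _ _
        exact hnn S
      simpa using this
  · exact part2 k hk
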